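/- Let (P, A, λ) be a marked poset and let x be a vertex (extreme point) of the marked order polytope O_{P,A}(λ). Then every coordinate of x lies in the set {λ(a) : a ∈ A}; i.e. for every p ∈ P∖A there exists a ∈ A with x(p) = λ(a). -/

import Mathlib

open Classical in
/-- The extension of `x : P∖A → ℝ` to all of `P`, taking the value `lam a` on marked
elements `a ∈ A`. -/
noncomputable def mopExtend {P : Type*} (A : Set P) (lam : A → ℝ)
    (x : {p : P // p ∉ A} → ℝ) : P → ℝ :=
  fun p => if h : p ∈ A then lam ⟨p, h⟩ else x ⟨p, h⟩

/-- The marked order polytope of the marked poset `(P, A, lam)`, realized in `ℝ^{P∖A}`. -/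
def markedOrderPolytope {P : Type*} [PartialOrder P] (A : Set P) (lam : A → ℝ) :
    Set ({p : P // p ∉ A} → ℝ) :=
  {x | ∀ p q : P, p ≤ q → mopExtend A lam x p ≤ mopExtend A lam x q}

/-- Every coordinate of a vertex of a marked order polytope is equal to one of the
markings `lam a`. -/
theorem statement1 {P : Type*} [Fintype P] [PartialOrder P]
    (A : Set P) (lam : A → ℝ)
    (hAmin : ∀ p : P, IsMin p → p ∈ A) (hAmax : ∀ p : P, IsMax p → p ∈ A)
    (hlam : ∀ a b : A, (a : P) ≤ (b : P) → lam a ≤ lam b)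
    (x : {p : P // p ∉ A} → ℝ)
    (hx : x ∈ (markedOrderPolytope A lam).extremePoints ℝ) :
    ∀ p : {p : P // p ∉ A}, ∃ a : A, x p = lam a := by
  classical
  intro p
  by_contra hcon
  push_neg at hcon
  set c := x p with hc
  set E : P → ℝ := mopExtend A lam x with hE
  set d : {q : P // q ∉ A} → ℝ := fun q => if x q = c then 1 else 0 with hd
  set D : P → ℝ := fun u => if h : u ∈ A then 0 else d ⟨u, h⟩ with hDdef
  have hD : ∀ (t : ℝ) (u : P), mopExtend A lam (x + t • d) u = E u + t * D u := by
    intro t u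
    by_cases h : u ∈ A <;> simp [mopExtend, hE, hDdef, h] <;> ring
  have hD01 : ∀ u : P, D u = 0 ∨ D u = 1 := by
    intro u
    by_cases h : u ∈ A
    · left; simp [hDdef, h]
    · simp only [hDdef, h, dif_neg, hd]
      by_cases h2 : x ⟨u, h⟩ = c <;> simp [h2]
  -- choose a gap ε
  obtain ⟨ε, hε, hgap⟩ : ∃ ε > 0, ∀ u v : P, E u < E v → E u + 2 * ε ≤ E v := by
    set T : Finset (P × P) := Finset.univ.filter (fun uv => E uv.1 < E uv.2) with hT
    rcases T.eq_empty_or_nonempty with hTe | hTn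
    · refine ⟨1, one_pos, fun u v huv => absurd ?_ (by simp [hTe] : (u, v) ∉ T)⟩
      simp [hT, huv]
    · set m := T.inf' hTn (fun uv => E uv.2 - E uv.1) with hm
      have hmpos : 0 < m := by
        rw [hm, Finset.lt_inf'_iff]
        intro uv huv
        have : E uv.1 < E uv.2 := by simpa [hT] using huv
        linarith
      refine ⟨m / 3, by linarith, fun u v huv => ?_⟩
      have hle : m ≤ E v - E u := Finset.inf'_le _ (by simp [hT, huv] : (u, v) ∈ T)
      linarith
  -- membership of the perturbations
  have hmem : ∀ t : ℝ, |t| ≤ ε → (x + t • d) ∈ markedOrderPolytope A lam := by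
    intro t ht u v huv
    rw [hD, hD]
    have hEuv : E u ≤ E v := hx.1 u v huv
    rcases eq_or_lt_of_le hEuv with heq | hlt
    · have hDeq : D u = D v := by
        by_cases hu : u ∈ A <;> by_cases hv : v ∈ A
        · simp [hDdef, hu, hv]
        · have hEv : E v = x ⟨v, hv⟩ := by simp [hE, mopExtend, hv]
          have hEu : E u = lam ⟨u, hu⟩ := by simp [hE, mopExtend, hu]
          have : x ⟨v, hv⟩ ≠ c := by
            intro hcc
            exact hcon ⟨u, hu⟩ (by rw [← hcc, ← hEv, ← heq, hEu])
          simp [hDdef, hu, hv, hd, this]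
        · have hEu : E u = x ⟨u, hu⟩ := by simp [hE, mopExtend, hu]
          have hEv : E v = lam ⟨v, hv⟩ := by simp [hE, mopExtend, hv]
          have : x ⟨u, hu⟩ ≠ c := by
            intro hcc
            exact hcon ⟨v, hv⟩ (by rw [← hcc, ← hEu, heq, hEv])
          simp [hDdef, hu, hv, hd, this]
        · have hEu : E u = x ⟨u, hu⟩ := by simp [hE, mopExtend, hu]
          have hEv : E v = x ⟨v, hv⟩ := by simp [hE, mopExtend, hv]
          have hxeq : x ⟨u, hu⟩ = x ⟨v, hv⟩ := by rw [← hEu, ← hEv, heq]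
          simp [hDdef, hu, hv, hd, hxeq]
      rw [heq, hDeq]
    · have h2 := hgap u v hlt
      have h3 : t ≤ |t| := le_abs_self t
      have h4 : -|t| ≤ t := neg_abs_le t
      rcases hD01 u with hu | hu <;> rcases hD01 v with hv | hv <;>
        rw [hu, hv] <;> nlinarith
  have h1 : x + ε • d ∈ markedOrderPolytope A lam := hmem ε (by rw [abs_of_pos hε])
  have h2 : x + (-ε) • d ∈ markedOrderPolytope A lam :=
    hmem (-ε) (by rw [abs_neg, abs_of_pos hε])
  have hseg : x ∈ openSegment ℝ (x + (-ε) • d) (x + ε • d) := by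
    refine ⟨1 / 2, 1 / 2, by norm_num, by norm_num, by norm_num, ?_⟩
    funext q
    simp only [Pi.add_apply, Pi.smul_apply, Pi.neg_apply, smul_eq_mul, neg_smul]
    ring
  have hfix := hx.2 h2 h1 hseg
  have hq := congrFun hfix p
  have hdp : d p = 1 := by simp [hd, hc]
  simp only [Pi.add_apply, Pi.smul_apply, smul_eq_mul, hdp, mul_one] at hq
  linarith
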